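/- For every n ∈ ℕ and every integer c > 2, the hypergraph H_n satisfies disc(H_n, c) ≥ n/c. -/

import Mathlib

open Finset

/-- `c`-color discrepancy of the subhypergraph of `(V, E)` induced on `V₀`:
minimum over colorings of the maximum over colors `d` and edges `e` of
`||χ⁻¹(d) ∩ e ∩ V₀| - |e ∩ V₀|/c|`. -/
noncomputable def hdiscSub {V : Type*} [Fintype V] [DecidableEq V]
    (E : Finset (Finset V)) (c : ℕ) (V₀ : Finset V) : ℝ :=
  ⨅ χ : V → Fin c, ⨆ d : Fin c, ⨆ e : E,
    |(((e.1 ∩ V₀).filter (fun v => χ v = d)).card : ℝ) - ((e.1 ∩ V₀).card : ℝ) / c|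

/-- `c`-color discrepancy of the hypergraph `(V, E)`. -/
noncomputable def hdisc {V : Type*} [Fintype V] [DecidableEq V]
    (E : Finset (Finset V)) (c : ℕ) : ℝ := hdiscSub E c Finset.univ

/-- hereditary `c`-color discrepancy: maximum over all induced subhypergraphs. -/
noncomputable def hherdisc {V : Type*} [Fintype V] [DecidableEq V]
    (E : Finset (Finset V)) (c : ℕ) : ℝ := ⨆ V₀ : Finset V, hdiscSub E c V₀

/-- The hypergraph `H_n` on vertex set `A ⊔ B` with `|A| = |B| = n`, whose edges are exactly
the sets containing equally many vertices of `A` and of `B`. -/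
def Hn (n : ℕ) : Finset (Finset (Fin n ⊕ Fin n)) :=
  Finset.univ.filter (fun e =>
    (e.filter (fun v => v.isLeft = true)).card = (e.filter (fun v => v.isRight = true)).card)

lemma good_color_exists (n c : ℕ) (hc : 2 < c) (χ : (Fin n ⊕ Fin n) → Fin c) :
    ∃ d : Fin c,
      (Finset.univ.filter fun i : Fin n => χ (Sum.inl i) = d).card ≤ n / 2 ∧
      (Finset.univ.filter fun i : Fin n => χ (Sum.inr i) = d).card ≤ n / 2 := by
  set a : Fin c → ℕ := fun d => (Finset.univ.filter fun i : Fin n => χ (Sum.inl i) = d).card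
    with ha
  set b : Fin c → ℕ := fun d => (Finset.univ.filter fun i : Fin n => χ (Sum.inr i) = d).card
    with hb
  haveI : NeZero c := ⟨by omega⟩
  have hsa : ∑ d : Fin c, a d = n := by
    have := Finset.card_eq_sum_card_fiberwise
      (f := fun i : Fin n => χ (Sum.inl i)) (s := Finset.univ) (t := Finset.univ)
      (fun x _ => Finset.mem_univ _)
    simpa [ha] using this.symm
  have hsb : ∑ d : Fin c, b d = n := by
    have := Finset.card_eq_sum_card_fiberwise
      (f := fun i : Fin n => χ (Sum.inr i)) (s := Finset.univ) (t := Finset.univ)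
      (fun x _ => Finset.mem_univ _)
    simpa [hb] using this.symm
  by_contra h
  push_neg at h
  have key : ∀ f : Fin c → ℕ, ∑ d : Fin c, f d = n →
      ((Finset.univ.filter fun d => n / 2 < f d).card ≤ 1) := by
    intro f hf
    apply Finset.card_le_one.mpr
    intro d1 h1 d2 h2
    by_contra hne
    simp only [Finset.mem_filter] at h1 h2
    have hsum : f d1 + f d2 ≤ n := by
      have : ∑ d ∈ ({d1, d2} : Finset (Fin c)), f d ≤ ∑ d : Fin c, f d :=
        Finset.sum_le_sum_of_subset (Finset.subset_univ _)
      rwa [Finset.sum_pair hne, hf] at this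
    omega
  have hcov : (Finset.univ : Finset (Fin c)) ⊆
      (Finset.univ.filter fun d => n / 2 < a d) ∪ (Finset.univ.filter fun d => n / 2 < b d) := by
    intro d _
    simp only [Finset.mem_union, Finset.mem_filter, Finset.mem_univ, true_and]
    by_cases h' : a d ≤ n / 2
    · exact Or.inr (h d h')
    · exact Or.inl (by omega)
  have := Finset.card_le_card hcov
  have h2 := Finset.card_union_le (Finset.univ.filter fun d => n / 2 < a d)
    (Finset.univ.filter fun d => n / 2 < b d)
  have hA := key a hsa
  have hB := key b hsb
  simp only [Finset.card_univ, Fintype.card_fin] at this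
  omega

/-- For every n ∈ ℕ and every integer c > 2, the hypergraph H_n satisfies disc(H_n, c) ≥ n/c. -/
theorem disc_Hn_ge (n c : ℕ) (hc : 2 < c) :
    (n : ℝ) / c ≤ hdisc (Hn n) c := by
  haveI : NeZero c := ⟨by omega⟩
  have hc0 : (0 : ℝ) < c := by exact_mod_cast (by omega : 0 < c)
  rw [hdisc, hdiscSub]
  apply le_ciInf
  intro χ
  obtain ⟨d, hA, hB⟩ := good_color_exists n c hc χ
  set k := n - n / 2 with hk
  have hAcard : k ≤ (Finset.univ.filter fun i : Fin n => ¬ (χ (Sum.inl i) = d)).card := by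
    have := Finset.card_filter_add_card_filter_not (s := (Finset.univ : Finset (Fin n)))
      (p := fun i => χ (Sum.inl i) = d)
    simp only [Finset.card_univ, Fintype.card_fin] at this
    omega
  have hBcard : k ≤ (Finset.univ.filter fun i : Fin n => ¬ (χ (Sum.inr i) = d)).card := by
    have := Finset.card_filter_add_card_filter_not (s := (Finset.univ : Finset (Fin n)))
      (p := fun i => χ (Sum.inr i) = d)
    simp only [Finset.card_univ, Fintype.card_fin] at this
    omega
  obtain ⟨S, hS, hScard⟩ := Finset.exists_subset_card_eq hAcard
  obtain ⟨T, hT, hTcard⟩ := Finset.exists_subset_card_eq hBcard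
  set e : Finset (Fin n ⊕ Fin n) := S.image Sum.inl ∪ T.image Sum.inr with he_def
  have hleft : e.filter (fun v => v.isLeft = true) = S.image Sum.inl := by
    ext v
    cases v <;>
      simp [he_def, Finset.mem_filter, Finset.mem_union, Finset.mem_image]
  have hright : e.filter (fun v => v.isRight = true) = T.image Sum.inr := by
    ext v
    cases v <;>
      simp [he_def, Finset.mem_filter, Finset.mem_union, Finset.mem_image]
  have hScard' : (S.image (Sum.inl : Fin n → Fin n ⊕ Fin n)).card = k := by
    rw [Finset.card_image_of_injective _ (Sum.inl_injective : Function.Injective (Sum.inl : Fin n → Fin n ⊕ Fin n)), hScard]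
  have hTcard' : (T.image (Sum.inr : Fin n → Fin n ⊕ Fin n)).card = k := by
    rw [Finset.card_image_of_injective _ (Sum.inr_injective : Function.Injective (Sum.inr : Fin n → Fin n ⊕ Fin n)), hTcard]
  have he : e ∈ Hn n := by
    simp only [Hn, Finset.mem_filter, Finset.mem_univ, true_and]
    rw [hleft, hright, hScard', hTcard']
  have hdisj : Disjoint (S.image Sum.inl) (T.image Sum.inr) := by
    simp [Finset.disjoint_left, Finset.mem_image]
  have hecard : e.card = 2 * k := by
    rw [he_def, Finset.card_union_of_disjoint hdisj, hScard', hTcard']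
    omega
  have hnoChrome : e.filter (fun v => χ v = d) = ∅ := by
    rw [Finset.filter_eq_empty_iff]
    intro v hv
    rw [he_def, Finset.mem_union] at hv
    rcases hv with hv | hv
    · obtain ⟨i, hi, rfl⟩ := Finset.mem_image.mp hv
      have := hS hi
      simp only [Finset.mem_filter] at this
      exact this.2
    · obtain ⟨i, hi, rfl⟩ := Finset.mem_image.mp hv
      have := hT hi
      simp only [Finset.mem_filter] at this
      exact this.2
  have hbdd1 : BddAbove (Set.range fun d : Fin c => ⨆ e : (Hn n : Finset (Finset (Fin n ⊕ Fin n))),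
      |(((e.1 ∩ Finset.univ).filter (fun v => χ v = d)).card : ℝ) - ((e.1 ∩ Finset.univ).card : ℝ) / c|) :=
    Set.Finite.bddAbove (Set.finite_range _)
  refine le_ciSup_of_le hbdd1 d ?_
  have hbdd2 : BddAbove (Set.range fun e : (Hn n : Finset (Finset (Fin n ⊕ Fin n))) =>
      |(((e.1 ∩ Finset.univ).filter (fun v => χ v = d)).card : ℝ) - ((e.1 ∩ Finset.univ).card : ℝ) / c|) :=
    Set.Finite.bddAbove (Set.finite_range _)
  refine le_ciSup_of_le hbdd2 ⟨e, he⟩ ?_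
  simp only [Finset.inter_univ]
  rw [hnoChrome, hecard]
  simp only [Finset.card_empty, Nat.cast_zero, zero_sub, abs_neg]
  rw [abs_of_nonneg (by positivity)]
  have h2k : (n : ℝ) ≤ (2 * k : ℕ) := by exact_mod_cast (by omega : n ≤ 2 * k)
  gcongr
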